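/- arXiv:2108.03176 — 4 statements merged into one kernel-verified Lean document; each statement's English description precedes it below -/
import Mathlib

section
/- With u_t as above (u_t = σ(3D−3t+1)/(3D−3t+4)), for each t ∈ {1,…,D−1} the unique maximizer p*_t of p ↦ 2σp(1−p) + (1−p)²·u_{t+1} over [0,1] equals p*_t = (σ − u_{t+1})/(2σ − u_{t+1}) = 3/(3D−3t+4). -/
/-- For `u_{t+1} = σ(3D−3t−2)/(3D−3t+1)`, the unique maximizer of
`p ↦ 2σp(1−p) + (1−p)²·u_{t+1}` over `[0,1]` is `(σ−u_{t+1})/(2σ−u_{t+1}) = 3/(3D−3t+4)`. -/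
theorem stmt3 (σ : ℝ) (hσ : 0 < σ) (D t : ℕ) (hD : 2 ≤ D) (ht : 1 ≤ t) (ht' : t ≤ D - 1) :
    let u : ℝ := σ * (3 * (D - t) - 2 : ℕ) / (3 * (D - t) + 1 : ℕ)
    let h : ℝ → ℝ := fun p => 2 * σ * p * (1 - p) + (1 - p) ^ 2 * u
    let pstar : ℝ := (σ - u) / (2 * σ - u)
    pstar = 3 / (3 * (D - t) + 4 : ℕ) ∧
    pstar ∈ Set.Icc (0:ℝ) 1 ∧
    (∀ p ∈ Set.Icc (0:ℝ) 1, h p ≤ h pstar) ∧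
    (∀ p ∈ Set.Icc (0:ℝ) 1, h p = h pstar → p = pstar) := by
  intro u h pstar
  have hk : 1 ≤ D - t := by omega
  have hK : (1 : ℝ) ≤ (D - t : ℕ) := by exact_mod_cast hk
  set K : ℝ := ((D - t : ℕ) : ℝ) with hKdef
  have hcast : ((3 * (D - t) - 2 : ℕ) : ℝ) = 3 * K - 2 := by
    have : 2 ≤ 3 * (D - t) := by omega
    push_cast [Nat.cast_sub this]
    ring
  have hA : (0:ℝ) < 3 * K + 1 := by linarith
  have hu : u = σ * (3 * K - 2) / (3 * K + 1) := by
    simp only [u, hcast]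
    push_cast
    ring_nf
    rw [← hKdef]
  have hc : 0 < 2 * σ - u := by
    rw [hu, sub_pos, div_lt_iff₀ hA]
    nlinarith
  have hB : (0:ℝ) < 3 * K + 4 := by linarith
  have hps : pstar = 3 / (3 * K + 4) := by
    simp only [pstar, hu]
    rw [div_eq_div_iff (by linarith [hc, hu] : (2 * σ - σ * (3 * K - 2) / (3 * K + 1)) ≠ 0) (ne_of_gt hB)]
    · field_simp
      ring
  have hps' : pstar = 3 / ((3 * (D - t) + 4 : ℕ) : ℝ) := by
    rw [hps]; push_cast; ring_nf
    rw [← hKdef]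
  have key : ∀ p : ℝ, h p = h pstar - (2 * σ - u) * (p - pstar) ^ 2 := by
    intro p
    simp only [h, pstar]
    field_simp
    ring
  refine ⟨hps', ?_, ?_, ?_⟩
  · rw [hps]
    constructor
    · positivity
    · rw [div_le_one hB]; linarith
  · intro p _
    have := key p
    nlinarith [sq_nonneg (p - pstar)]
  · intro p _ hp
    have := key p
    have h2 : (2 * σ - u) * (p - pstar) ^ 2 = 0 := by linarith
    have := mul_eq_zero.mp h2
    rcases this with h3 | h3
    · linarith
    · have := pow_eq_zero_iff (n := 2) (by norm_num) |>.mp h3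
      linarith
end

section
/- Let 0 < α ≤ 1, M ≥ 1, and g(p) = Σ_{i=1}^{M+1} i·C(M+1,i)·α^i·(1−α)^{M+1−i}·p·(1−p)^{i−1}. Then g is maximized over p ∈ [0,1] at p = min(1/((M+1)α), 1). -/
lemma key_sum (α p : ℝ) (M : ℕ) :
    ∑ i ∈ Finset.Icc 1 (M + 1),
      (i : ℝ) * ((M + 1).choose i : ℝ) * α ^ i * (1 - α) ^ (M + 1 - i) * p * (1 - p) ^ (i - 1)
    = ((M:ℝ)+1) * α * (p * (1 - α * p) ^ M) := by
  have hIcc : Finset.Icc 1 (M+1) = Finset.Ico 1 (M+2) := by ext x; simp [Nat.lt_succ_iff]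
  rw [hIcc, Finset.sum_Ico_eq_sum_range]
  have hpow : (1 - α * p) ^ M = ∑ j ∈ Finset.range (M+1),
      (α*(1-p))^j * (1-α)^(M-j) * (M.choose j : ℝ) := by
    rw [← add_pow]; ring_nf
  rw [hpow]
  have hM2 : M + 2 - 1 = M + 1 := by omega
  rw [hM2, Finset.mul_sum, Finset.mul_sum]
  refine Finset.sum_congr rfl fun j hj => ?_
  have h1 : M + 1 - (1 + j) = M - j := by omega
  have h2 : 1 + j - 1 = j := by omega
  have h3 : 1 + j = j + 1 := by omega
  rw [h1, h2, h3]
  have hc : ((1:ℝ)+j) * (((M + 1).choose (j + 1) : ℕ) : ℝ) = ((M:ℝ)+1) * (M.choose j : ℝ) := by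
    have h := congrArg (Nat.cast : ℕ → ℝ) (Nat.add_one_mul_choose_eq M j)
    push_cast at h
    linarith
  push_cast
  calc ((j:ℝ)+1) * ((M + 1).choose (j + 1) : ℝ) * α ^ (j + 1) * (1 - α) ^ (M - j) * p * (1 - p) ^ j
      = (((1:ℝ)+j) * ((M + 1).choose (j + 1) : ℝ)) * (α ^ (j + 1) * (1 - α) ^ (M - j) * p * (1 - p) ^ j) := by ring
    _ = (((M:ℝ)+1) * (M.choose j : ℝ)) * (α ^ (j + 1) * (1 - α) ^ (M - j) * p * (1 - p) ^ j) := by rw [hc]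
    _ = ((M:ℝ)+1) * α * (p * ((α * (1 - p)) ^ j * (1 - α) ^ (M - j) * (M.choose j:ℝ))) := by
        rw [pow_succ, mul_pow]; ring

lemma f_deriv (M : ℕ) (hM : 1 ≤ M) (x : ℝ) :
    HasDerivAt (fun t : ℝ => t * (1 - t) ^ M)
      ((1 - x) ^ (M - 1) * (1 - ((M:ℝ)+1) * x)) x := by
  have h1 : HasDerivAt (fun t : ℝ => 1 - t) (-1) x := (hasDerivAt_id x).const_sub 1
  have h2 : HasDerivAt (fun t : ℝ => (1 - t) ^ M) ((M:ℝ) * (1 - x) ^ (M - 1) * (-1)) x :=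
    h1.pow M
  have h3 := (hasDerivAt_id x).mul h2
  refine h3.congr_deriv ?_
  have hMm : M - 1 + 1 = M := by omega
  have : (1 - x) ^ M = (1 - x) ^ (M - 1) * (1 - x) := by rw [← pow_succ, hMm]
  rw [this]; simp only [id_eq]; ring

lemma f_mono (M : ℕ) (hM : 1 ≤ M) :
    MonotoneOn (fun t : ℝ => t * (1 - t) ^ M) (Set.Icc 0 (1/((M:ℝ)+1))) := by
  have hc : (0:ℝ) < 1/((M:ℝ)+1) := by positivity
  apply monotoneOn_of_deriv_nonneg (convex_Icc _ _)
  · exact (continuous_id.mul ((continuous_const.sub continuous_id).pow M)).continuousOn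
  · intro x hx
    exact ((f_deriv M hM x).differentiableAt).differentiableWithinAt
  · intro x hx
    rw [interior_Icc] at hx
    rw [(f_deriv M hM x).deriv]
    have hM1 : (1:ℝ) ≤ (M:ℝ) := by exact_mod_cast hM
    have hx1 : x < 1 := by
      have h := hx.2
      have : 1/((M:ℝ)+1) ≤ 1 := by rw [div_le_one (by linarith)]; linarith
      linarith
    apply mul_nonneg
    · apply pow_nonneg; linarith
    · have : ((M:ℝ)+1) * x ≤ 1 := by
        have := hx.2
        rw [lt_div_iff₀ (by positivity)] at this
        linarith
      linarith

lemma f_anti (M : ℕ) (hM : 1 ≤ M) :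
    AntitoneOn (fun t : ℝ => t * (1 - t) ^ M) (Set.Icc (1/((M:ℝ)+1)) 1) := by
  apply antitoneOn_of_deriv_nonpos (convex_Icc _ _)
  · exact (continuous_id.mul ((continuous_const.sub continuous_id).pow M)).continuousOn
  · intro x hx
    exact ((f_deriv M hM x).differentiableAt).differentiableWithinAt
  · intro x hx
    rw [interior_Icc] at hx
    rw [(f_deriv M hM x).deriv]
    apply mul_nonpos_of_nonneg_of_nonpos
    · apply pow_nonneg; linarith [hx.2]
    · have : (1:ℝ) ≤ ((M:ℝ)+1) * x := by
        have := hx.1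
        rw [div_lt_iff₀ (by positivity)] at this
        linarith
      linarith
/-- `g(p) = Σ_{i=1}^{M+1} i·C(M+1,i)α^i(1−α)^{M+1−i}·p(1−p)^{i−1}` is maximized over
`[0,1]` at `p = min(1/((M+1)α), 1)`. -/
theorem stmt8 (α : ℝ) (hα : 0 < α) (hα' : α ≤ 1) (M : ℕ) (hM : 1 ≤ M) :
    let g : ℝ → ℝ := fun p => ∑ i ∈ Finset.Icc 1 (M + 1),
      (i : ℝ) * ((M + 1).choose i : ℝ) * α ^ i * (1 - α) ^ (M + 1 - i) * p * (1 - p) ^ (i - 1)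
    ∀ p ∈ Set.Icc (0:ℝ) 1, g p ≤ g (min (1 / ((M + 1 : ℝ) * α)) 1) := by
  intro g p hp
  set c : ℝ := 1/((M:ℝ)+1) with hc
  have hM1 : (1:ℝ) ≤ (M:ℝ) := by exact_mod_cast hM
  have hcpos : 0 < c := by positivity
  have hc1 : c ≤ 1 := by rw [hc, div_le_one (by linarith)]; linarith
  set p' : ℝ := min (1 / ((M + 1 : ℝ) * α)) 1 with hp'def
  have e1 : g p = ((M:ℝ)+1) * α * (p * (1 - α * p) ^ M) := key_sum α p M
  have e2 : g p' = ((M:ℝ)+1) * α * (p' * (1 - α * p') ^ M) := key_sum α p' M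
  rw [e1, e2]
  have key : α * p' = min c α := by
    rw [hp'def, mul_min_of_nonneg _ _ hα.le, mul_one, hc]
    congr 1
    field_simp
  have hf : (α*p) * (1 - α*p) ^ M ≤ (α*p') * (1 - α*p') ^ M := by
    rw [key]
    have htmem : 0 ≤ α * p := mul_nonneg hα.le hp.1
    have htle : α * p ≤ α := by
      calc α * p ≤ α * 1 := by nlinarith [hp.2]
        _ = α := mul_one α
    rcases le_total α c with h | h
    · rw [min_eq_right h]
      exact f_mono M hM ⟨htmem, le_trans htle h⟩ ⟨hα.le, h⟩ htle
    · rw [min_eq_left h]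
      rcases le_total (α * p) c with h2 | h2
      · exact f_mono M hM ⟨htmem, h2⟩ ⟨hcpos.le, le_refl c⟩ h2
      · exact f_anti M hM ⟨le_refl c, hc1⟩ ⟨h2, by linarith⟩ h2
  calc ((M:ℝ)+1) * α * (p * (1 - α * p) ^ M) = ((M:ℝ)+1) * ((α*p) * (1 - α*p) ^ M) := by ring
    _ ≤ ((M:ℝ)+1) * ((α*p') * (1 - α*p') ^ M) := by
        apply mul_le_mul_of_nonneg_left hf (by linarith)
    _ = ((M:ℝ)+1) * α * (p' * (1 - α * p') ^ M) := by ring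
end

section
/- Let 0 < α < 1, 0 < p ≤ 1, M ≥ 1. Define the posterior pmf after a busy observation: for 0 ≤ n' ≤ M−1, b'(n') = [C(M,n')·(α(1−p))^{n'}·(1−α(1−p))^{M−n'} − (1−αp)^M·C(M,n')·((α−αp)/(1−αp))^{n'}·(1−(α−αp)/(1−αp))^{M−n'}] / (1 − (1−αp)^M). Then b' is a probability distribution on {0,…,M−1}, and its mean equals M·(α − αp)·(1 − (1−αp)^{M−1}) / (1 − (1−αp)^M). -/
lemma binom_sum (x y : ℝ) (n : ℕ) :
    ∑ k ∈ Finset.range (n+1), (n.choose k : ℝ) * x ^ k * y ^ (n-k) = (x+y) ^ n := by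
  rw [add_pow]
  exact Finset.sum_congr rfl fun k _ => by ring

lemma binom_mean (x y : ℝ) (n : ℕ) :
    ∑ k ∈ Finset.range (n+1), (k : ℝ) * (n.choose k : ℝ) * x ^ k * y ^ (n-k)
      = n * x * (x+y) ^ (n-1) := by
  cases n with
  | zero => simp
  | succ m =>
    rw [Finset.sum_range_succ']
    have h : ∀ i ∈ Finset.range (m+1),
        ((i+1 : ℕ) : ℝ) * ((m+1).choose (i+1) : ℝ) * x ^ (i+1) * y ^ (m+1-(i+1))
        = (m+1 : ℝ) * x * ((m.choose i : ℝ) * x ^ i * y ^ (m-i)) := by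
      intro i _
      have hc : ((m+1) * m.choose i : ℕ) = ((m+1).choose (i+1) * (i+1) : ℕ) :=
        Nat.add_one_mul_choose_eq m i
      have hc' : ((m:ℝ)+1) * (m.choose i : ℝ) = ((m+1).choose (i+1) : ℝ) * ((i:ℝ)+1) := by
        exact_mod_cast hc
      have hsub : m + 1 - (i+1) = m - i := by omega
      rw [hsub, pow_succ]
      push_cast
      linear_combination (-(x ^ i * x * y ^ (m - i))) * hc'
    rw [Finset.sum_congr rfl h]
    rw [← Finset.mul_sum, binom_sum]
    simp

/-- The posterior after a busy observation is a probability distribution on `{0,…,M−1}`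
with mean `M(α−αp)(1−(1−αp)^{M−1})/(1−(1−αp)^M)`. -/
theorem stmt10 (α p : ℝ) (hα : 0 < α) (hα' : α < 1) (hp : 0 < p) (hp' : p ≤ 1)
    (M : ℕ) (hM : 1 ≤ M) :
    let b' : ℕ → ℝ := fun n' =>
      ((M.choose n' : ℝ) * (α * (1 - p)) ^ n' * (1 - α * (1 - p)) ^ (M - n')
        - (1 - α * p) ^ M * (M.choose n' : ℝ) * ((α - α * p) / (1 - α * p)) ^ n' *
            (1 - (α - α * p) / (1 - α * p)) ^ (M - n'))
        / (1 - (1 - α * p) ^ M)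
    (∀ n' < M, 0 ≤ b' n') ∧
    (∑ n' ∈ Finset.range M, b' n' = 1) ∧
    (∑ n' ∈ Finset.range M, (n' : ℝ) * b' n'
      = M * (α - α * p) * (1 - (1 - α * p) ^ (M - 1)) / (1 - (1 - α * p) ^ M)) := by
  intro b'
  obtain ⟨m, rfl⟩ : ∃ m, M = m + 1 := ⟨M - 1, by omega⟩
  have hq0 : 0 ≤ α * (1 - p) := mul_nonneg hα.le (by linarith)
  have hap : 0 < α * p := mul_pos hα hp
  have hap1 : α * p < 1 := by nlinarith
  have hr : 0 < 1 - α * p := by linarith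
  have hrM : (1 - α * p) ^ (m+1) < 1 := pow_lt_one₀ hr.le (by linarith) (by omega)
  have hD : 0 < 1 - (1 - α * p) ^ (m+1) := by linarith
  have h1a : (0:ℝ) ≤ 1 - α := by linarith
  have h1b : 1 - α ≤ 1 - α * (1 - p) := by nlinarith
  set f : ℕ → ℝ := fun n' => ((m+1).choose n' : ℝ) * (α * (1-p)) ^ n' *
      ((1 - α*(1-p)) ^ (m+1-n') - (1-α) ^ (m+1-n')) with hfdef
  have key : ∀ n', n' ≤ m + 1 → b' n' = f n' / (1 - (1 - α * p) ^ (m+1)) := by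
    intro n' hn
    have h1 : 1 - (α - α * p) / (1 - α * p) = (1 - α) / (1 - α * p) := by
      field_simp
      ring
    have hsplit : (1 - α*p) ^ (m+1) = (1 - α*p) ^ n' * (1 - α*p) ^ (m + 1 - n') := by
      rw [← pow_add]; congr 1; omega
    have h2 : (1 - α*p) ^ (m+1) * (((m+1).choose n' : ℝ)) *
        ((α - α*p)/(1-α*p)) ^ n' * (1 - (α-α*p)/(1-α*p)) ^ (m+1-n')
        = ((m+1).choose n' : ℝ) * (α * (1-p)) ^ n' * (1-α) ^ (m+1-n') := by
      rw [h1, div_pow, div_pow, hsplit]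
      have hn0 : (1 - α*p) ^ n' ≠ 0 := pow_ne_zero _ (ne_of_gt hr)
      have hn1 : (1 - α*p) ^ (m+1-n') ≠ 0 := pow_ne_zero _ (ne_of_gt hr)
      field_simp
    show (_ - _) / _ = _
    rw [h2, hfdef]
    ring_nf
  have hf2 : ∑ n' ∈ Finset.range (m+2), f n' = 1 - (1 - α*p)^(m+1) := by
    have h01 : ∀ n' ∈ Finset.range (m+2), f n' =
        ((m+1).choose n' : ℝ) * (α * (1-p)) ^ n' * (1 - α*(1-p)) ^ (m+1-n')
        - ((m+1).choose n' : ℝ) * (α * (1-p)) ^ n' * (1-α) ^ (m+1-n') :=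
      fun n' _ => by simp only [hfdef]; ring
    rw [Finset.sum_congr rfl h01, Finset.sum_sub_distrib, binom_sum, binom_sum]
    have e1 : α*(1-p) + (1-α*(1-p)) = 1 := by ring
    have e2 : α*(1-p) + (1-α) = 1 - α*p := by ring
    rw [e1, e2, one_pow]
  have hfm : f (m+1) = 0 := by simp [hfdef]
  have hf1 : ∑ n' ∈ Finset.range (m+1), f n' = 1 - (1 - α*p)^(m+1) := by
    rw [← hf2, Finset.sum_range_succ f (m+1), hfm, add_zero]
  have hg2 : ∑ n' ∈ Finset.range (m+2), (n' : ℝ) * f n'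
      = ((m:ℝ)+1) * (α*(1-p)) * (1 - (1 - α*p)^m) := by
    have h01 : ∀ n' ∈ Finset.range (m+2), (n' : ℝ) * f n' =
        (n' : ℝ) * ((m+1).choose n' : ℝ) * (α * (1-p)) ^ n' * (1 - α*(1-p)) ^ (m+1-n')
        - (n' : ℝ) * ((m+1).choose n' : ℝ) * (α * (1-p)) ^ n' * (1-α) ^ (m+1-n') :=
      fun n' _ => by simp only [hfdef]; ring
    rw [Finset.sum_congr rfl h01, Finset.sum_sub_distrib, binom_mean, binom_mean]
    have e1 : α*(1-p) + (1-α*(1-p)) = 1 := by ring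
    have e2 : α*(1-p) + (1-α) = 1 - α*p := by ring
    rw [e1, e2, one_pow]
    push_cast
    ring
  have hg1 : ∑ n' ∈ Finset.range (m+1), (n' : ℝ) * f n'
      = ((m:ℝ)+1) * (α*(1-p)) * (1 - (1 - α*p)^m) := by
    rw [← hg2, Finset.sum_range_succ (fun n' => (n':ℝ) * f n') (m+1)]
    simp [hfm]
  refine ⟨?_, ?_, ?_⟩
  · intro n' hn
    rw [key n' (by omega)]
    apply div_nonneg _ hD.le
    apply mul_nonneg (mul_nonneg (Nat.cast_nonneg _) (pow_nonneg hq0 _))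
    have := pow_le_pow_left₀ h1a h1b (m+1-n')
    linarith
  · rw [Finset.sum_congr rfl fun n' hx => key n' (le_of_lt (Finset.mem_range.mp hx)), ← Finset.sum_div, hf1,
      div_self hD.ne']
  · have : ∀ n' ∈ Finset.range (m+1), (n':ℝ) * b' n'
        = ((n':ℝ) * f n') / (1 - (1 - α * p) ^ (m+1)) := fun n' _ => by
      rw [key n' (le_of_lt (Finset.mem_range.mp ‹n' ∈ Finset.range (m+1)›))]; ring
    rw [Finset.sum_congr rfl this, ← Finset.sum_div, hg1]
    have hm1 : m + 1 - 1 = m := rfl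
    rw [hm1]
    push_cast
    ring_nf
end

section
/- Let σ > 0, D ≥ 2, and u = σ·(3D−5)/(3D−2) (the optimal continuation value U*_2(1,1)). Then max_{p∈[0,1]} [2σp(1−p) + (1−p)²·u] = σ²/(2σ−u) = σ·(3D−2)/(3D+1). -/
/-- With `u = σ(3D−5)/(3D−2)`, the maximum over `[0,1]` of `2σp(1−p) + (1−p)²u` is
`σ²/(2σ−u) = σ(3D−2)/(3D+1)`. -/
theorem stmt17 (σ : ℝ) (hσ : 0 < σ) (D : ℕ) (hD : 2 ≤ D) :
    let u : ℝ := σ * (3 * D - 5 : ℕ) / (3 * D - 2 : ℕ)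
    IsGreatest ((fun p : ℝ => 2 * σ * p * (1 - p) + (1 - p) ^ 2 * u) '' Set.Icc 0 1)
      (σ ^ 2 / (2 * σ - u)) ∧
    σ ^ 2 / (2 * σ - u) = σ * (3 * D - 2 : ℕ) / (3 * D + 1 : ℕ) := by
  intro u
  have h5 : 5 ≤ 3 * D := by omega
  have h2 : 2 ≤ 3 * D := by omega
  have e5 : ((3 * D - 5 : ℕ) : ℝ) = 3 * (D : ℝ) - 5 := by push_cast [h5]; ring
  have e2 : ((3 * D - 2 : ℕ) : ℝ) = 3 * (D : ℝ) - 2 := by push_cast [h2]; ring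
  have hd : (2 : ℝ) ≤ (D : ℝ) := by exact_mod_cast hD
  have hden : (0 : ℝ) < 3 * (D : ℝ) - 2 := by linarith
  have hu : u = σ * (3 * (D : ℝ) - 5) / (3 * (D : ℝ) - 2) := by
    simp only [u, e5, e2]
  have hu0 : 0 ≤ u := by
    rw [hu]; apply div_nonneg _ hden.le; nlinarith
  have huσ : u < σ := by
    rw [hu, div_lt_iff₀ hden]; nlinarith
  have hpos : 0 < 2 * σ - u := by linarith
  constructor
  · constructor
    · refine ⟨(σ - u) / (2 * σ - u), ⟨div_nonneg (by linarith) hpos.le, ?_⟩, ?_⟩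
      · rw [div_le_one hpos]; linarith
      · field_simp
        ring
    · rintro y ⟨p, ⟨hp0, hp1⟩, rfl⟩
      dsimp only
      rw [le_div_iff₀ hpos]
      nlinarith [sq_nonneg ((2 * σ - u) * p - (σ - u))]
  · rw [hu]
    have h1 : (0 : ℝ) < 3 * (D : ℝ) + 1 := by linarith
    have : ((3 * D + 1 : ℕ) : ℝ) = 3 * (D : ℝ) + 1 := by push_cast; ring
    rw [e2, this]
    have key : 2 * σ - σ * (3 * (D:ℝ) - 5) / (3 * (D:ℝ) - 2) = σ * (3 * (D:ℝ) + 1) / (3 * (D:ℝ) - 2) := by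
      field_simp; ring
    rw [key]
    rw [div_div_eq_mul_div, div_eq_div_iff (by positivity) h1.ne']
    ring
end
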